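/- For every integer k ≥ 2 and all n, m ≥ 0, the Bell numbers of order k satisfy b_k(n)·b_k(m) ≤ b_k(n+m) ≤ 2^{n+m}·b_k(n)·b_k(m). -/

import Mathlib

open scoped Nat ContDiff
open Finset

/-- The `k`-times iterated exponential function: `expIter 0 = id`,
`expIter (k+1) x = exp (expIter k x)`. -/
noncomputable def expIter : ℕ → ℝ → ℝ
  | 0 => id
  | k + 1 => fun x => Real.exp (expIter k x)

/-- `BellB k n` is the `n`-th derivative of the `k`-times iterated exponential at `0`,
so that `expIter k x = ∑ n, BellB k n * x ^ n / n !`. -/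
noncomputable def BellB (k n : ℕ) : ℝ := iteratedDeriv n (expIter k) 0

/-- The Bell numbers of order `k`: `bellOrd k n = BellB k n / expIter k 0`. -/
noncomputable def bellOrd (k n : ℕ) : ℝ := BellB k n / expIter k 0

lemma contDiff_expIter (k : ℕ) : ContDiff ℝ ∞ (expIter k) := by
  induction k with
  | zero => exact contDiff_id
  | succ k ih => exact Real.contDiff_exp.comp ih

lemma hasDerivAt_expIter (k : ℕ) (x : ℝ) :
    HasDerivAt (expIter (k+1)) (expIter (k+1) x * deriv (expIter k) x) x := by
  have h1 : DifferentiableAt ℝ (expIter k) x :=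
    ((contDiff_expIter k).differentiable (by simp)).differentiableAt
  have := (h1.hasDerivAt.exp)
  simpa [expIter, mul_comm] using this

lemma deriv_expIter (k : ℕ) :
    deriv (expIter (k+1)) = fun x => expIter (k+1) x * deriv (expIter k) x := by
  funext x; exact (hasDerivAt_expIter k x).deriv

lemma contDiff_deriv_expIter (k : ℕ) : ContDiff ℝ ∞ (deriv (expIter k)) :=
  (contDiff_infty_iff_deriv.mp (contDiff_expIter k)).2

lemma iteratedDeriv_add_apply' {f g : ℝ → ℝ} (hf : ContDiff ℝ ∞ f) (hg : ContDiff ℝ ∞ g)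
    (n : ℕ) (x : ℝ) :
    iteratedDeriv n (fun y => f y + g y) x = iteratedDeriv n f x + iteratedDeriv n g x := by
  have h1 : (fun y => f y + g y) = f + g := rfl
  have hfn : ContDiff ℝ n f := hf.of_le (by exact_mod_cast le_top)
  have hgn : ContDiff ℝ n g := hg.of_le (by exact_mod_cast le_top)
  rw [h1, iteratedDeriv_eq_iteratedFDeriv, iteratedDeriv_eq_iteratedFDeriv,
    iteratedDeriv_eq_iteratedFDeriv, iteratedFDeriv_add_apply hfn.contDiffAt hgn.contDiffAt,
    ContinuousMultilinearMap.add_apply]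

lemma iteratedDeriv_mul_apply (n : ℕ) :
    ∀ (f g : ℝ → ℝ), ContDiff ℝ ∞ f → ContDiff ℝ ∞ g → ∀ x : ℝ,
      iteratedDeriv n (fun y => f y * g y) x =
        ∑ i ∈ range (n + 1),
          (n.choose i : ℝ) * (iteratedDeriv i f x * iteratedDeriv (n - i) g x) := by
  induction n with
  | zero => intro f g hf hg x; simp
  | succ n ih =>
    intro f g hf hg x
    have hf' : ContDiff ℝ ∞ (deriv f) := (contDiff_infty_iff_deriv.mp hf).2
    have hg' : ContDiff ℝ ∞ (deriv g) := (contDiff_infty_iff_deriv.mp hg).2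
    have hfd : Differentiable ℝ f := hf.differentiable (by simp)
    have hgd : Differentiable ℝ g := hg.differentiable (by simp)
    have hd : deriv (fun y => f y * g y) = fun y => deriv f y * g y + f y * deriv g y := by
      funext y; exact deriv_mul (hfd y) (hgd y)
    rw [iteratedDeriv_succ', hd,
      iteratedDeriv_add_apply' (hf'.mul hg) (hf.mul hg') n x, ih _ _ hf' hg x,
      ih _ _ hf hg' x]
    have hT1 : ∀ i ∈ range (n+1),
        (n.choose i : ℝ) * (iteratedDeriv i (deriv f) x * iteratedDeriv (n - i) g x)
          = (n.choose i : ℝ) * (iteratedDeriv (i+1) f x * iteratedDeriv (n + 1 - (i+1)) g x) := by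
      intro i hi
      rw [← iteratedDeriv_succ']
      congr 3
      omega
    have hT2 : ∀ i ∈ range (n+1),
        (n.choose i : ℝ) * (iteratedDeriv i f x * iteratedDeriv (n - i) (deriv g) x)
          = (n.choose i : ℝ) * (iteratedDeriv i f x * iteratedDeriv (n + 1 - i) g x) := by
      intro i hi
      simp only [mem_range, Nat.lt_succ_iff] at hi
      rw [← iteratedDeriv_succ']
      congr 3
      omega
    rw [Finset.sum_congr rfl hT1, Finset.sum_congr rfl hT2]
    set T : ℕ → ℝ := fun i => iteratedDeriv i f x * iteratedDeriv (n + 1 - i) g x with hT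
    have key : ∑ i ∈ range (n+2), ((n+1).choose i : ℝ) * T i
        = ∑ i ∈ range (n+1), (n.choose i : ℝ) * T (i+1)
          + ∑ i ∈ range (n+1), (n.choose i : ℝ) * T i := by
      have e1 := Finset.sum_range_succ' (fun i => (((n+1).choose i : ℝ)) * T i) (n+1)
      have e2 := Finset.sum_range_succ' (fun i => ((n.choose i : ℝ)) * T i) (n+1)
      have e3 := Finset.sum_range_succ (fun i => ((n.choose i : ℝ)) * T i) (n+1)
      simp only [Nat.choose_zero_right, Nat.cast_one, one_mul, Nat.choose_succ_self,
        Nat.cast_zero, zero_mul, add_zero] at e1 e2 e3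
      have e4 : ∀ i ∈ range (n+1), (((n+1).choose (i+1) : ℝ)) * T (i+1)
          = ((n.choose i : ℝ)) * T (i+1) + ((n.choose (i+1) : ℝ)) * T (i+1) := by
        intro i _
        have : ((n+1).choose (i+1) : ℝ) = (n.choose i : ℝ) + (n.choose (i+1) : ℝ) := by
          exact_mod_cast congrArg Nat.cast (Nat.choose_succ_succ n i)
        rw [this, add_mul]
      rw [e1, Finset.sum_congr rfl e4, Finset.sum_add_distrib]
      linarith [e2, e3]
    rw [key]

lemma expIter_zero_pos (k : ℕ) : 0 < expIter (k+1) 0 := Real.exp_pos _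

lemma expIter_one_zero : expIter 1 0 = 1 := by
  show Real.exp 0 = 1; exact Real.exp_zero

lemma BellB_zero (k : ℕ) : BellB k 0 = expIter k 0 := by
  simp [BellB]

lemma BellB_one_eq (n : ℕ) : BellB 1 n = 1 := by
  have h : expIter 1 = Real.exp := rfl
  rw [BellB, h, iteratedDeriv_eq_iterate, Real.iter_deriv_exp, Real.exp_zero]

lemma BellB_rec (k n : ℕ) :
    BellB (k+1) (n+1)
      = ∑ i ∈ range (n+1), (n.choose i : ℝ) * (BellB k (i+1) * BellB (k+1) (n-i)) := by
  have hcomm : deriv (expIter (k+1)) = fun x => deriv (expIter k) x * expIter (k+1) x := by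
    rw [deriv_expIter]; funext x; ring
  have h0 : BellB (k+1) (n+1) = iteratedDeriv n (deriv (expIter (k+1))) 0 := by
    rw [BellB, iteratedDeriv_succ']
  rw [h0, hcomm,
    iteratedDeriv_mul_apply n _ _ (contDiff_deriv_expIter k) (contDiff_expIter (k+1)) 0]
  refine Finset.sum_congr rfl fun i hi => ?_
  rw [← iteratedDeriv_succ']
  rfl

lemma bellOrd_zero (k : ℕ) : bellOrd (k+1) 0 = 1 := by
  rw [bellOrd, BellB_zero, div_self (expIter_zero_pos k).ne']

lemma bellOrd_one (n : ℕ) : bellOrd 1 n = 1 := by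
  rw [bellOrd, BellB_one_eq, expIter_one_zero, div_one]

lemma BellB_eq_mul (k n : ℕ) : BellB (k+1) n = expIter (k+1) 0 * bellOrd (k+1) n := by
  rw [bellOrd, mul_div_cancel₀ _ (expIter_zero_pos k).ne']

lemma bellOrd_rec (k n : ℕ) :
    bellOrd (k+2) (n+1) = ∑ i ∈ range (n+1),
      (n.choose i : ℝ) * (expIter (k+1) 0 * bellOrd (k+1) (i+1) * bellOrd (k+2) (n-i)) := by
  have hE : expIter (k+2) 0 ≠ 0 := (expIter_zero_pos (k+1)).ne'
  rw [bellOrd, BellB_rec, Finset.sum_div]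
  refine Finset.sum_congr rfl fun i hi => ?_
  rw [BellB_eq_mul k (i+1), BellB_eq_mul (k+1) (n-i)]
  field_simp

lemma bellOrd_pos : ∀ k n, 0 < bellOrd (k+1) n := by
  intro k
  induction k with
  | zero => intro n; rw [bellOrd_one]; norm_num
  | succ k ih =>
    intro n
    induction n using Nat.strong_induction_on with
    | _ n ihn =>
      match n with
      | 0 => rw [bellOrd_zero]; norm_num
      | Nat.succ m =>
        rw [bellOrd_rec]
        refine Finset.sum_pos (fun i hi => ?_) (by simp)
        have h1 : 0 < (m.choose i : ℝ) := by
          have := Nat.choose_pos (Nat.lt_succ_iff.mp (mem_range.mp hi))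
          exact_mod_cast this
        have h2 : 0 < bellOrd (k+2) (m-i) := ihn _ (by omega)
        have := expIter_zero_pos k
        have := ih (i+1)
        positivity

lemma bellOrd_two_rec (n : ℕ) :
    bellOrd 2 (n+1) = ∑ i ∈ range (n+1), (n.choose i : ℝ) * bellOrd 2 (n-i) := by
  have h := bellOrd_rec 0 n
  rw [h]
  refine Finset.sum_congr rfl fun i hi => ?_
  rw [expIter_one_zero, bellOrd_one]
  ring

lemma bellOrd_two_ge : ∀ n : ℕ, (n : ℝ) ≤ bellOrd 2 n := by
  intro n
  induction n with
  | zero => rw [Nat.cast_zero, bellOrd_zero]; norm_num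
  | succ n ih =>
    rw [bellOrd_two_rec]
    match n, ih with
    | 0, _ => simp [bellOrd_zero]
    | Nat.succ m, ih =>
      have hsub : ({0, m+1} : Finset ℕ) ⊆ range (m+2) := by
        intro x hx; simp at hx; rcases hx with rfl | rfl <;> simp
      have hnonneg : ∀ i ∈ range (m+2), i ∉ ({0, m+1} : Finset ℕ) →
          0 ≤ ((m+1).choose i : ℝ) * bellOrd 2 (m+1-i) := by
        intro i hi _
        have := bellOrd_pos 1 (m+1-i)
        positivity
      have hle := Finset.sum_le_sum_of_subset_of_nonneg hsub hnonneg
      rw [Finset.sum_pair (by omega : (0:ℕ) ≠ m+1)] at hle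
      simp only [Nat.choose_zero_right, Nat.cast_one, one_mul, Nat.sub_zero,
        Nat.choose_self, Nat.sub_self, bellOrd_zero, mul_one] at hle
      simp only [Nat.succ_eq_add_one] at ih ⊢
      push_cast at ih ⊢
      linarith

lemma exp_one_mul_le (x : ℝ) : Real.exp 1 * x ≤ Real.exp x := by
  have h1 : x - 1 + 1 ≤ Real.exp (x - 1) := Real.add_one_le_exp (x - 1)
  have h2 : Real.exp 1 * Real.exp (x - 1) = Real.exp x := by
    rw [← Real.exp_add]; ring_nf
  nlinarith [Real.exp_pos 1]

lemma expIter_two_zero : expIter 2 0 = Real.exp 1 := by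
  show Real.exp (expIter 1 0) = Real.exp 1
  rw [expIter_one_zero]

lemma two_le_exp_one : (2 : ℝ) ≤ Real.exp 1 := by
  have := Real.add_one_le_exp 1
  linarith

lemma expIter_succ_ge (k : ℕ) :
    Real.exp 1 * expIter (k+1) 0 ≤ expIter (k+2) 0 := by
  show Real.exp 1 * expIter (k+1) 0 ≤ Real.exp (expIter (k+1) 0)
  exact exp_one_mul_le _

/-- termwise helper for the growth lemma -/
lemma A_term {C P Q u v w t : ℝ} (m i : ℕ) (him : i ≤ m)
    (hC : 0 ≤ C) (hP : 0 < P) (hu : 0 < u) (hw : 0 < w) (hv0 : 0 < v) (ht0 : 0 < t)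
    (hQ : 2 * P ≤ Q) (hv : ((i:ℝ)+1) * u ≤ v) (ht : (((m-i : ℕ):ℝ)+1) * w ≤ t) :
    ((m:ℝ)+1+1) * (C * (P * u * w)) ≤ C * (Q * v * t) := by
  have hr : ((m-i:ℕ):ℝ) = (m:ℝ) - (i:ℝ) := by
    rw [Nat.cast_sub him]
  rw [hr] at ht
  have hi0 : (0:ℝ) ≤ (i:ℝ) := by positivity
  have hmi : (0:ℝ) ≤ (m:ℝ) - (i:ℝ) := by
    have : (i:ℝ) ≤ (m:ℝ) := by exact_mod_cast him
    linarith
  have h1 : (((i:ℝ)+1) * u) * ((((m:ℝ)-(i:ℝ))+1) * w) ≤ v * t :=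
    mul_le_mul hv ht (by positivity) (by linarith)
  have hq : (0:ℝ) ≤ 2*(((i:ℝ)+1)*(((m:ℝ)-(i:ℝ))+1)) - ((m:ℝ)+2) := by
    nlinarith [mul_nonneg hi0 hmi]
  have h2 : ((m:ℝ)+2) * (u*w) ≤ 2*((((i:ℝ)+1) * u) * ((((m:ℝ)-(i:ℝ))+1) * w)) := by
    nlinarith [mul_nonneg hu.le hw.le, mul_nonneg (mul_nonneg hu.le hw.le) hq]
  have h4 : ((m:ℝ)+2)*(u*w) ≤ 2*(v*t) := by nlinarith [h1, h2]
  have e1 := mul_le_mul_of_nonneg_left h4 hP.le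
  have e2 := mul_le_mul_of_nonneg_right hQ (mul_pos hv0 ht0).le
  have h5 : ((m:ℝ)+2)*(P*(u*w)) ≤ Q*(v*t) := by nlinarith [e1, e2]
  have h6 := mul_le_mul_of_nonneg_left h5 hC
  nlinarith [h6]

/-- key growth lemma: `(n+1) * b_{k+2}(n) ≤ b_{k+3}(n)` -/
lemma bellOrd_succ_order_ge : ∀ (k n : ℕ), ((n:ℝ)+1) * bellOrd (k+2) n ≤ bellOrd (k+3) n := by
  intro k
  induction k with
  | zero =>
    intro n
    induction n using Nat.strong_induction_on with
    | _ n ihn =>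
      match n with
      | 0 => simp [bellOrd_zero]
      | Nat.succ m =>
        rw [bellOrd_rec 0 m, bellOrd_rec 1 m, Finset.mul_sum]
        refine Finset.sum_le_sum fun i hi => ?_
        have him : i ≤ m := Nat.lt_succ_iff.mp (mem_range.mp hi)
        have ht := ihn (m - i) (by omega)
        have hv : ((i:ℝ)+1) * bellOrd 1 (i+1) ≤ bellOrd 2 (i+1) := by
          rw [bellOrd_one, mul_one]
          have := bellOrd_two_ge (i+1)
          push_cast at this ⊢
          linarith
        have hQ : 2 * expIter 1 0 ≤ expIter 2 0 := by
          rw [expIter_one_zero, expIter_two_zero, mul_one]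
          exact two_le_exp_one
        have hterm := A_term (C := ((m.choose i : ℕ):ℝ)) m i him (by positivity)
          (by rw [expIter_one_zero]; norm_num) (bellOrd_pos 0 (i+1)) (bellOrd_pos 1 (m-i))
          (bellOrd_pos 1 (i+1)) (bellOrd_pos 2 (m-i)) hQ hv ht
        push_cast at hterm ⊢
        convert hterm using 2 <;> push_cast <;> ring
  | succ k ih =>
    intro n
    induction n using Nat.strong_induction_on with
    | _ n ihn =>
      match n with
      | 0 => simp [bellOrd_zero]
      | Nat.succ m =>
        rw [bellOrd_rec (k+1) m, bellOrd_rec (k+2) m, Finset.mul_sum]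
        refine Finset.sum_le_sum fun i hi => ?_
        have him : i ≤ m := Nat.lt_succ_iff.mp (mem_range.mp hi)
        have ht := ihn (m - i) (by omega)
        have hv : ((i:ℝ)+1) * bellOrd (k+2) (i+1) ≤ bellOrd (k+3) (i+1) := by
          have h := ih (i+1)
          have hpos := bellOrd_pos (k+1) (i+1)
          push_cast at h ⊢
          nlinarith [h, hpos]
        have hQ : 2 * expIter (k+2) 0 ≤ expIter (k+3) 0 := by
          have h1 := expIter_succ_ge (k+1)
          have h2 := two_le_exp_one
          have h3 := expIter_zero_pos (k+1)
          nlinarith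
        have hterm := A_term (C := ((m.choose i : ℕ):ℝ)) m i him (by positivity)
          (expIter_zero_pos (k+1)) (bellOrd_pos (k+1) (i+1)) (bellOrd_pos (k+2) (m-i))
          (bellOrd_pos (k+2) (i+1)) (bellOrd_pos (k+3) (m-i)) hQ hv ht
        push_cast at hterm ⊢
        convert hterm using 2 <;> push_cast <;> ring

noncomputable def cse (k n : ℕ) : ℝ := bellOrd k n / (n)!

lemma cse_pos (k n : ℕ) : 0 < cse (k+1) n := by
  have h1 := bellOrd_pos k n
  have h2 : (0:ℝ) < (n)! := by exact_mod_cast Nat.factorial_pos n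
  exact div_pos h1 h2

lemma cse_zero (k : ℕ) : cse (k+1) 0 = 1 := by
  simp [cse, bellOrd_zero]

lemma cse_one (n : ℕ) : cse 1 n = 1 / (n)! := by
  rw [cse, bellOrd_one]

lemma cse_rec (k n : ℕ) :
    ((n:ℝ)+1) * cse (k+2) (n+1)
      = ∑ i ∈ range (n+1),
          (expIter (k+1) 0 * ((i:ℝ)+1) * cse (k+1) (i+1)) * cse (k+2) (n-i) := by
  have hL : ((n:ℝ)+1) * cse (k+2) (n+1) = bellOrd (k+2) (n+1) / (n)! := by
    rw [cse, Nat.factorial_succ]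
    have h2 : (0:ℝ) < (n)! := by exact_mod_cast Nat.factorial_pos n
    field_simp
    push_cast
    ring
  rw [hL, bellOrd_rec, Finset.sum_div]
  refine Finset.sum_congr rfl fun i hi => ?_
  have him : i ≤ n := Nat.lt_succ_iff.mp (mem_range.mp hi)
  have hfact : ((n.choose i : ℕ):ℝ) * (i)! * ((n-i))! = (n)! := by
    exact_mod_cast Nat.choose_mul_factorial_mul_factorial him
  rw [cse, cse, Nat.factorial_succ i]
  have h1 : (0:ℝ) < (n)! := by exact_mod_cast Nat.factorial_pos n
  have h2 : (0:ℝ) < (i)! := by exact_mod_cast Nat.factorial_pos i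
  have h3 : (0:ℝ) < ((n-i))! := by exact_mod_cast Nat.factorial_pos (n-i)
  field_simp
  push_cast
  linear_combination (expIter (k+1) 0 * ((i:ℝ)+1) * bellOrd (k+1) (i+1) * bellOrd (k+2) (n-i)) * hfact

lemma U_generic {c h : ℕ → ℝ} (hc0 : c 0 = 1) (hcpos : ∀ n, 0 < c n) (hh : ∀ a, 0 ≤ h a)
    (hrec : ∀ s : ℕ, ((s:ℝ)+1) * c (s+1) = ∑ a ∈ range (s+1), h a * c (s - a))
    (hR : ∀ n i : ℕ, 1 ≤ n → h (n + i) ≤ c n * h i) :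
    ∀ n m : ℕ, c (n + m) ≤ c n * c m := by
  have main : ∀ N : ℕ, ∀ n m : ℕ, n + m = N → c (n+m) ≤ c n * c m := by
    intro N
    induction N using Nat.strong_induction_on with
    | _ N ihN =>
      intro n m hnm
      match n, m with
      | n, 0 => simp [hc0]
      | 0, m => simp [hc0]
      | Nat.succ n', Nat.succ m' =>
        have hrec1 := hrec (n' + m' + 1)
        have hsplit : ∑ a ∈ range (n' + m' + 1 + 1), h a * c (n' + m' + 1 - a)
            = (∑ a ∈ range (n'+1), h a * c (n' + m' + 1 - a))
              + ∑ a ∈ Finset.Ico (n'+1) (n' + m' + 1 + 1), h a * c (n' + m' + 1 - a) :=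
          (Finset.sum_range_add_sum_Ico _ (by omega)).symm
        have hpart1 : (∑ a ∈ range (n'+1), h a * c (n' + m' + 1 - a))
            ≤ c (m'+1) * (((n':ℝ)+1) * c (n'+1)) := by
          rw [hrec n', Finset.mul_sum]
          refine Finset.sum_le_sum fun a ha => ?_
          have ha' : a ≤ n' := Nat.lt_succ_iff.mp (mem_range.mp ha)
          have hidx : n' + m' + 1 - a = (n' - a) + (m'+1) := by omega
          rw [hidx]
          have hih := ihN ((n'-a) + (m'+1)) (by omega) (n'-a) (m'+1) rfl
          calc h a * c (n'-a + (m'+1)) ≤ h a * (c (n'-a) * c (m'+1)) :=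
                mul_le_mul_of_nonneg_left hih (hh a)
            _ = c (m'+1) * (h a * c (n' - a)) := by ring
        have hpart2 : (∑ a ∈ Finset.Ico (n'+1) (n' + m' + 1 + 1), h a * c (n' + m' + 1 - a))
            ≤ c (n'+1) * (((m':ℝ)+1) * c (m'+1)) := by
          rw [Finset.sum_Ico_eq_sum_range]
          have hmm : n' + m' + 1 + 1 - (n'+1) = m' + 1 := by omega
          rw [hmm, hrec m', Finset.mul_sum]
          refine Finset.sum_le_sum fun t ht => ?_
          have ht' : t ≤ m' := Nat.lt_succ_iff.mp (mem_range.mp ht)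
          have hidx : n' + m' + 1 - (n' + 1 + t) = m' - t := by omega
          rw [hidx]
          have h2 := hR (n'+1) t (by omega)
          calc h (n' + 1 + t) * c (m'-t) ≤ (c (n'+1) * h t) * c (m'-t) :=
                mul_le_mul_of_nonneg_right h2 (hcpos _).le
            _ = c (n'+1) * (h t * c (m'-t)) := by ring
        have key : ((n':ℝ) + (m':ℝ) + 1 + 1) * c (n' + m' + 1 + 1)
            ≤ c (m'+1) * (((n':ℝ)+1) * c (n'+1)) + c (n'+1) * (((m':ℝ)+1) * c (m'+1)) := by
          push_cast at hrec1
          rw [hrec1, hsplit]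
          exact add_le_add hpart1 hpart2
        have hpos : (0:ℝ) < (n':ℝ) + (m':ℝ) + 1 + 1 := by positivity
        have hgoal : ((n':ℝ) + (m':ℝ) + 1 + 1) * c (n' + m' + 1 + 1)
            ≤ ((n':ℝ) + (m':ℝ) + 1 + 1) * (c (n'+1) * c (m'+1)) := by
          refine le_trans key (le_of_eq ?_)
          ring
        have hfin := le_of_mul_le_mul_left hgoal hpos
        have hidx2 : n' + 1 + (m' + 1) = n' + m' + 1 + 1 := by omega
        show c (n'+1+(m'+1)) ≤ c (n'+1) * c (m'+1)
        rw [hidx2]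
        exact hfin
  intro n m; exact main (n+m) n m rfl

lemma bellOrd_two_ge_one (n : ℕ) : (1:ℝ) ≤ bellOrd 2 n := by
  match n with
  | 0 => rw [bellOrd_zero]
  | Nat.succ n =>
    have := bellOrd_two_ge (n+1)
    push_cast at this
    linarith

def Rprop (k : ℕ) : Prop := ∀ n i : ℕ, 1 ≤ n →
  (((n+i:ℕ):ℝ)+1) * cse (k+1) (n+i+1) ≤ cse (k+2) n * (((i:ℝ)+1) * cse (k+1) (i+1))

lemma Rprop_zero : Rprop 0 := by
  intro n i _
  rw [cse_one, cse_one]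
  have ha : (0:ℝ) < (n)! := by exact_mod_cast Nat.factorial_pos n
  have hb : (0:ℝ) < (i)! := by exact_mod_cast Nat.factorial_pos i
  have hc : (0:ℝ) < ((n+i))! := by exact_mod_cast Nat.factorial_pos (n+i)
  have hfac : ((n)! : ℝ) * ((i)! : ℝ) ≤ ((n+i))! := by
    exact_mod_cast Nat.le_of_dvd (Nat.factorial_pos _)
      (Nat.factorial_mul_factorial_dvd_factorial_add n i)
  have hL : (((n+i:ℕ):ℝ)+1) * (1/(((n+i+1))! :ℝ)) = 1/(((n+i))! :ℝ) := by
    rw [Nat.factorial_succ]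
    push_cast
    field_simp
  have hRt : ((i:ℝ)+1) * (1/(((i+1))! :ℝ)) = 1/((i)! :ℝ) := by
    rw [Nat.factorial_succ]
    push_cast
    field_simp
  rw [hL]
  have hb2 : (1:ℝ) ≤ bellOrd 2 n := bellOrd_two_ge_one n
  have hcse : 1/((n)! :ℝ) ≤ cse 2 n := by
    rw [cse]
    gcongr
  calc 1/(((n+i))! :ℝ) ≤ 1/(((n)! :ℝ) * ((i)! :ℝ)) := by
        apply one_div_le_one_div_of_le (by positivity) hfac
    _ = (1/((n)! :ℝ)) * (1/((i)! :ℝ)) := by ring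
    _ ≤ cse 2 n * (1/((i)! :ℝ)) := by
        apply mul_le_mul_of_nonneg_right hcse (by positivity)
    _ = cse 2 n * (((i:ℝ)+1) * (1/(((i+1))! :ℝ))) := by rw [hRt]

lemma cse_A (k n : ℕ) : ((n:ℝ)+1) * cse (k+2) n ≤ cse (k+3) n := by
  have h := bellOrd_succ_order_ge k n
  rw [cse, cse]
  have hf : (0:ℝ) < (n)! := by exact_mod_cast Nat.factorial_pos n
  calc ((n:ℝ)+1) * (bellOrd (k+2) n / (n)!) = (((n:ℝ)+1) * bellOrd (k+2) n) / (n)! := by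
        ring
    _ ≤ bellOrd (k+3) n / (n)! := by gcongr

lemma Rprop_succ (k : ℕ)
    (hU : ∀ n m : ℕ, cse (k+2) (n+m) ≤ cse (k+2) n * cse (k+2) m) : Rprop (k+1) := by
  intro n i _
  have hU1 : cse (k+2) (n+i+1) ≤ cse (k+2) n * cse (k+2) (i+1) := hU n (i+1)
  have hA := cse_A k n
  have hc1 := cse_pos (k+1) n
  have hc2 := cse_pos (k+1) (i+1)
  have hc3 := cse_pos (k+2) n
  have hni : (((n+i:ℕ):ℝ)+1) = (n:ℝ) + (i:ℝ) + 1 := by push_cast; ring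
  rw [hni]
  calc ((n:ℝ) + (i:ℝ) + 1) * cse (k+2) (n+i+1)
      ≤ ((n:ℝ) + (i:ℝ) + 1) * (cse (k+2) n * cse (k+2) (i+1)) := by
        apply mul_le_mul_of_nonneg_left hU1 (by positivity)
    _ ≤ (((i:ℝ)+1) * (((n:ℝ)+1) * cse (k+2) n)) * cse (k+2) (i+1) := by
        have hle : ((n:ℝ) + (i:ℝ) + 1) ≤ ((i:ℝ)+1) * ((n:ℝ)+1) := by
          have h1 : (0:ℝ) ≤ (n:ℝ) := by positivity
          have h2 : (0:ℝ) ≤ (i:ℝ) := by positivity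
          nlinarith
        nlinarith [mul_le_mul_of_nonneg_right hle (mul_pos hc1 hc2).le]
    _ ≤ (((i:ℝ)+1) * cse (k+3) n) * cse (k+2) (i+1) := by
        apply mul_le_mul_of_nonneg_right _ hc2.le
        apply mul_le_mul_of_nonneg_left hA (by positivity)
    _ = cse (k+3) n * (((i:ℝ)+1) * cse (k+2) (i+1)) := by ring

lemma cse_submul : ∀ k, ∀ n m : ℕ, cse (k+2) (n+m) ≤ cse (k+2) n * cse (k+2) m := by
  have step : ∀ k, Rprop k → ∀ n m : ℕ, cse (k+2) (n+m) ≤ cse (k+2) n * cse (k+2) m := by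
    intro k hR
    refine U_generic (c := cse (k+2)) (h := fun a => expIter (k+1) 0 * ((a:ℝ)+1) * cse (k+1) (a+1))
      (cse_zero (k+1)) (cse_pos (k+1)) (fun a => ?_) (fun s => ?_) (fun n i hn => ?_)
    · have := cse_pos k (a+1)
      have := expIter_zero_pos k
      positivity
    · exact cse_rec k s
    · have hRn := hR n i hn
      have hE := expIter_zero_pos k
      have := mul_le_mul_of_nonneg_left hRn hE.le
      have hni : (((n+i:ℕ):ℝ)) = (n:ℝ) + (i:ℝ) := by push_cast; ring
      simp only [hni] at this ⊢
      nlinarith [this]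
  intro k
  induction k with
  | zero => exact step 0 Rprop_zero
  | succ k ih => exact step (k+1) (Rprop_succ k ih)

lemma choose_le_two_pow' (N j : ℕ) (h : j ≤ N) : N.choose j ≤ 2^N := by
  calc N.choose j ≤ ∑ i ∈ range (N+1), N.choose i :=
        Finset.single_le_sum (fun i _ => Nat.zero_le _) (mem_range.mpr (by omega))
    _ = 2^N := Nat.sum_range_choose N

lemma bellOrd_supermul (k : ℕ) : ∀ m n : ℕ, bellOrd (k+2) n * bellOrd (k+2) m ≤ bellOrd (k+2) (n+m) := by
  intro m
  induction m using Nat.strong_induction_on with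
  | _ m ihm =>
    intro n
    match m with
    | 0 => rw [bellOrd_zero, mul_one]; exact le_rfl
    | Nat.succ m' =>
      show bellOrd (k+2) n * bellOrd (k+2) (m'+1) ≤ bellOrd (k+2) (n + (m'+1))
      rw [show n + (m'+1) = (n+m') + 1 from rfl, bellOrd_rec k (n+m'), bellOrd_rec k m',
        Finset.mul_sum]
      have hsub : range (m'+1) ⊆ range (n+m'+1) := by
        intro x hx; simp only [mem_range] at hx ⊢; omega
      refine le_trans (Finset.sum_le_sum fun i hi => ?_)
        (Finset.sum_le_sum_of_subset_of_nonneg hsub fun i _ _ => ?_)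
      · have him : i ≤ m' := Nat.lt_succ_iff.mp (mem_range.mp hi)
        have hch : ((m'.choose i : ℕ):ℝ) ≤ (((n+m').choose i : ℕ):ℝ) := by
          exact_mod_cast Nat.choose_le_choose i (by omega : m' ≤ n + m')
        have hih := ihm (m'-i) (by omega) n
        have hidx : n + (m'-i) = n + m' - i := by omega
        rw [hidx] at hih
        have hE := expIter_zero_pos k
        have hu := bellOrd_pos k (i+1)
        have hx := bellOrd_pos (k+1) n
        have hy := bellOrd_pos (k+1) (m'-i)
        have hz := bellOrd_pos (k+1) (n+m'-i)
        have hC1 : (0:ℝ) ≤ (m'.choose i : ℝ) := by positivity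
        have t1 : ((m'.choose i : ℕ):ℝ) * (expIter (k+1) 0 * bellOrd (k+1) (i+1))
              * (bellOrd (k+2) n * bellOrd (k+2) (m'-i))
            ≤ ((m'.choose i : ℕ):ℝ) * (expIter (k+1) 0 * bellOrd (k+1) (i+1))
              * bellOrd (k+2) (n+m'-i) :=
          mul_le_mul_of_nonneg_left hih (by positivity)
        have t2 : ((m'.choose i : ℕ):ℝ) * ((expIter (k+1) 0 * bellOrd (k+1) (i+1))
              * bellOrd (k+2) (n+m'-i))
            ≤ (((n+m').choose i : ℕ):ℝ) * ((expIter (k+1) 0 * bellOrd (k+1) (i+1))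
              * bellOrd (k+2) (n+m'-i)) :=
          mul_le_mul_of_nonneg_right hch (by positivity)
        nlinarith [t1, t2]
      · have hE := expIter_zero_pos k
        have hu := bellOrd_pos k (i+1)
        have hz := bellOrd_pos (k+1) (n+m'-i)
        positivity


/-- For every integer `k ≥ 2` and all `n, m ≥ 0`,
`bellOrd k n * bellOrd k m ≤ bellOrd k (n + m) ≤ 2 ^ (n+m) * bellOrd k n * bellOrd k m`. -/
theorem bellOrd_product_bounds_two (k : ℕ) (hk : 2 ≤ k) (n m : ℕ) :
    bellOrd k n * bellOrd k m ≤ bellOrd k (n + m) ∧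
      bellOrd k (n + m) ≤ 2 ^ (n + m) * (bellOrd k n * bellOrd k m) := by
  obtain ⟨j, rfl⟩ : ∃ j, k = j + 2 := ⟨k - 2, by omega⟩
  refine ⟨bellOrd_supermul j m n, ?_⟩
  have hc := cse_submul j n m
  have hfn : (0:ℝ) < (n)! := by exact_mod_cast Nat.factorial_pos n
  have hfm : (0:ℝ) < (m)! := by exact_mod_cast Nat.factorial_pos m
  have hfnm : (0:ℝ) < ((n+m))! := by exact_mod_cast Nat.factorial_pos (n+m)
  have hbn := bellOrd_pos (j+1) n
  have hbm := bellOrd_pos (j+1) m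
  have hfact : (((n+m).choose n : ℕ):ℝ) * ((n)! : ℝ) * ((m)! : ℝ) = ((n+m))! := by
    have h := Nat.choose_mul_factorial_mul_factorial (by omega : n ≤ n + m)
    rw [show n + m - n = m by omega] at h
    exact_mod_cast h
  have hchoose : (((n+m).choose n : ℕ):ℝ) ≤ (2:ℝ)^(n+m) := by
    exact_mod_cast choose_le_two_pow' (n+m) n (by omega)
  rw [cse, cse, cse] at hc
  rw [div_mul_div_comm] at hc
  rw [div_le_div_iff₀ hfnm (by positivity)] at hc
  -- hc : bellOrd (j+2) (n+m) * (n! * m!) ≤ bellOrd n * bellOrd m * (n+m)!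
  calc bellOrd (j+2) (n+m)
      = (bellOrd (j+2) (n+m) * (((n)!:ℝ) * ((m)!:ℝ))) / (((n)!:ℝ) * ((m)!:ℝ)) := by
        field_simp
    _ ≤ (bellOrd (j+2) n * bellOrd (j+2) m * (((n+m))! :ℝ)) / (((n)!:ℝ) * ((m)!:ℝ)) := by
        gcongr
    _ = (((n+m).choose n : ℕ):ℝ) * (bellOrd (j+2) n * bellOrd (j+2) m) := by
        rw [← hfact]; field_simp
    _ ≤ 2 ^ (n + m) * (bellOrd (j+2) n * bellOrd (j+2) m) := by
        apply mul_le_mul_of_nonneg_right hchoose (by positivity)
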